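/- For every x with |x| > 1, the function y ↦ (1/g(y))·∫₁^{z(x,y)} (u−1)^{αρ}(u+1)^{αρ̂−2} du tends to 0 as y → 1 from the right. -/

import Mathlib

open Real MeasureTheory Set Filter intervalIntegral
open scoped Topology

/-- `ψ_{αρ}(u) = (u−1)^{αρ̂−1}(u+1)^{αρ−1}` where `ρ̂ = 1 − ρ`. -/
noncomputable def psiRho (α ρ : ℝ) (u : ℝ) : ℝ :=
  (u - 1) ^ (α * (1 - ρ) - 1) * (u + 1) ^ (α * ρ - 1)

/-- `ψ_{αρ̂}(u) = (u−1)^{αρ−1}(u+1)^{αρ̂−1}` where `ρ̂ = 1 − ρ`. -/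
noncomputable def psiRhoHat (α ρ : ℝ) (u : ℝ) : ℝ :=
  (u - 1) ^ (α * ρ - 1) * (u + 1) ^ (α * (1 - ρ) - 1)

/-- `g(y) = (y−1)^{αρ}(y+1)^{αρ̂−1}`. -/
noncomputable def gfun (α ρ : ℝ) (y : ℝ) : ℝ :=
  (y - 1) ^ (α * ρ) * (y + 1) ^ (α * (1 - ρ) - 1)

/-- `z(x,y) = |xy−1|/|x−y|`. -/
noncomputable def zfun (x y : ℝ) : ℝ := |x * y - 1| / |x - y|

/-- `c_{αρ} = 2^{αρ}·π·αρ·Γ(αρ)/Γ(1−αρ̂)`. -/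
noncomputable def cRho (α ρ : ℝ) : ℝ :=
  2 ^ (α * ρ) * π * (α * ρ) * Real.Gamma (α * ρ) / Real.Gamma (1 - α * (1 - ρ))

/-- The harmonic function `v₁` (defined piecewise for `x > 1` and `x < −1`). -/
noncomputable def v1fun (α ρ : ℝ) (x : ℝ) : ℝ :=
  if 1 < x then
    Real.sin (π * (α * (1 - ρ))) *
      ((x + 1) * psiRho α ρ x - max (α - 1) 0 * ∫ u in (1:ℝ)..x, psiRho α ρ u)
  else
    Real.sin (π * (α * ρ)) *
      ((|x| - 1) * psiRhoHat α ρ |x| - max (α - 1) 0 * ∫ u in (1:ℝ)..|x|, psiRhoHat α ρ u)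

/-- The explicit Profeta–Simon Green function `U(x,y)` (for `x > y > 1` resp. `x < −1 < 1 < y`). -/
noncomputable def Ufun (α ρ : ℝ) (x y : ℝ) : ℝ :=
  if 1 < x then
    (2 ^ (1 - α) / (Real.Gamma (α * ρ) * Real.Gamma (α * (1 - ρ)))) *
      ((x - y) ^ (α - 1) * (∫ u in (1:ℝ)..zfun x y, psiRhoHat α ρ u)
        - max (α - 1) 0 * (∫ u in (1:ℝ)..y, psiRhoHat α ρ u) * ∫ u in (1:ℝ)..x, psiRho α ρ u)
  else
    (Real.sin (π * (α * ρ)) / Real.sin (π * (α * (1 - ρ)))) *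
    (2 ^ (1 - α) / (Real.Gamma (α * ρ) * Real.Gamma (α * (1 - ρ)))) *
      ((y - x) ^ (α - 1) * (∫ u in (1:ℝ)..zfun x y, psiRhoHat α ρ u)
        - max (α - 1) 0 * (∫ u in (1:ℝ)..y, psiRhoHat α ρ u) * ∫ u in (1:ℝ)..|x|, psiRhoHat α ρ u)

lemma zfun_bounds (x y : ℝ) (hx : 1 < |x|) (hy1 : 1 < y) (hyx2 : y < (|x| + 1) / 2) :
    1 ≤ zfun x y ∧ zfun x y ≤ 1 + (2 * (|x| + 1) / (|x| - 1)) * (y - 1) := by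
  have hd : (|x| - 1) / 2 ≤ |x - y| := by
    have h1 : |x| - |y| ≤ |x - y| := abs_sub_abs_le_abs_sub x y
    have h2 : |y| = y := abs_of_pos (by linarith)
    rw [h2] at h1
    linarith
  have hd0 : 0 < |x - y| := lt_of_lt_of_le (by linarith) hd
  have hx2 : 1 < x ^ 2 := by
    have := sq_abs x
    nlinarith
  have hy2sq : 1 < y ^ 2 := by nlinarith
  have hsq : (x - y) ^ 2 ≤ (x * y - 1) ^ 2 := by
    nlinarith [mul_pos (show (0:ℝ) < x ^ 2 - 1 by linarith)
      (show (0:ℝ) < y ^ 2 - 1 by linarith)]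
  have habs : |x - y| ≤ |x * y - 1| := by
    have h1 : |x - y| ^ 2 ≤ |x * y - 1| ^ 2 := by
      rw [sq_abs, sq_abs]; exact hsq
    nlinarith [abs_nonneg (x - y), abs_nonneg (x * y - 1)]
  have hz1 : 1 ≤ zfun x y := (one_le_div hd0).mpr habs
  refine ⟨hz1, ?_⟩
  have h1 : |x * y - 1| ≤ |x - y| + (|x| + 1) * (y - 1) := by
    have h2 : |x * y - 1| - |x - y| ≤ |x * y - 1 - (x - y)| :=
      abs_sub_abs_le_abs_sub _ _
    have h3 : |x * y - 1 - (x - y)| = |x + 1| * (y - 1) := by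
      have h3' : x * y - 1 - (x - y) = (x + 1) * (y - 1) := by ring
      rw [h3', abs_mul, abs_of_pos (show (0:ℝ) < y - 1 by linarith)]
    have h4 : |x + 1| ≤ |x| + 1 := by
      calc |x + 1| ≤ |x| + |(1:ℝ)| := abs_add_le _ _
      _ = |x| + 1 := by rw [abs_one]
    have h4' : |x + 1| * (y - 1) ≤ (|x| + 1) * (y - 1) :=
      mul_le_mul_of_nonneg_right h4 (by linarith)
    linarith
  have h5 : zfun x y ≤ (|x - y| + (|x| + 1) * (y - 1)) / |x - y| := by
    rw [zfun]
    exact (div_le_div_iff_of_pos_right hd0).mpr h1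
  have h6 : (|x - y| + (|x| + 1) * (y - 1)) / |x - y|
      = 1 + (|x| + 1) * (y - 1) / |x - y| := by
    field_simp
  have h7 : (|x| + 1) * (y - 1) / |x - y|
      ≤ (|x| + 1) * (y - 1) / ((|x| - 1) / 2) :=
    div_le_div_of_nonneg_left (by nlinarith [abs_nonneg x]) (by linarith) hd
  have h8 : (|x| + 1) * (y - 1) / ((|x| - 1) / 2)
      = (2 * (|x| + 1) / (|x| - 1)) * (y - 1) := by
    have hne : |x| - 1 ≠ 0 := ne_of_gt (by linarith)
    field_simp
  calc zfun x y ≤ 1 + (|x| + 1) * (y - 1) / |x - y| := by rw [← h6]; exact h5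
    _ ≤ 1 + (2 * (|x| + 1) / (|x| - 1)) * (y - 1) := by rw [← h8]; linarith

/-- As `y → 1⁺`, `(1/g(y))·∫₁^{z(x,y)} (u−1)^{αρ}(u+1)^{αρ̂−2} du → 0` for `|x| > 1`. -/
theorem stmt_4 (α ρ : ℝ) (hα0 : 0 < α) (hα2 : α < 2) (hρ0 : 0 < ρ) (hρ1 : ρ < 1)
    (hαρ : α * ρ < 1) (hαρh : α * (1 - ρ) < 1)
    (x : ℝ) (hx : 1 < |x|) :
    Tendsto (fun y : ℝ =>
        (1 / gfun α ρ y) * ∫ u in (1:ℝ)..zfun x y, (u - 1) ^ (α * ρ) * (u + 1) ^ (α * (1 - ρ) - 2))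
      (𝓝[>] (1:ℝ)) (𝓝 0) := by
  set a := α * ρ with ha
  set b := α * (1 - ρ) with hb
  have ha0 : 0 < a := mul_pos hα0 hρ0
  have hK0 : 0 < 2 * (|x| + 1) / (|x| - 1) := by
    apply div_pos (by positivity) (by linarith)
  set K : ℝ := 2 * (|x| + 1) / (|x| - 1) with hK
  set C : ℝ := 2 ^ (b - 2) * (K ^ a * K) * 3 ^ (1 - b) with hC
  have hδ0 : 0 < min ((|x| - 1) / 2) 1 := lt_min (by linarith) one_pos
  set δ : ℝ := min ((|x| - 1) / 2) 1 with hδ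
  have hmem : Ioo (1:ℝ) (1 + δ) ∈ 𝓝[>] (1:ℝ) :=
    Ioo_mem_nhdsGT_of_mem ⟨le_refl _, by linarith⟩
  have key : ∀ y ∈ Ioo (1:ℝ) (1 + δ),
      (0 ≤ (1 / gfun α ρ y) * ∫ u in (1:ℝ)..zfun x y,
          (u - 1) ^ a * (u + 1) ^ (b - 2)) ∧
      ((1 / gfun α ρ y) * ∫ u in (1:ℝ)..zfun x y,
          (u - 1) ^ a * (u + 1) ^ (b - 2)) ≤ C * (y - 1) := by
    intro y hy
    obtain ⟨hy1, hy2⟩ := hy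
    have hyδ : y - 1 < δ := by linarith
    have hyx2 : y < (|x| + 1) / 2 := by
      have : δ ≤ (|x| - 1) / 2 := min_le_left _ _
      linarith
    have hy2' : y < 2 := by
      have : δ ≤ 1 := min_le_right _ _
      linarith
    obtain ⟨hz1, hzKle⟩ := zfun_bounds x y hx hy1 hyx2
    have hz0 : (0:ℝ) ≤ zfun x y - 1 := by linarith
    have hzK' : zfun x y - 1 ≤ K * (y - 1) := by rw [hK]; linarith
    -- positivity of g
    have hA : (0:ℝ) < (y - 1) ^ a := Real.rpow_pos_of_pos (by linarith) _
    have hB : (0:ℝ) < (y + 1) ^ (b - 1) := Real.rpow_pos_of_pos (by linarith) _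
    have hg : 0 < gfun α ρ y := mul_pos hA hB
    have hginv0 : (0:ℝ) ≤ 1 / gfun α ρ y := by positivity
    constructor
    · apply mul_nonneg hginv0
      apply intervalIntegral.integral_nonneg hz1
      intro u hu
      exact mul_nonneg (Real.rpow_nonneg (by linarith [hu.1]) _)
        (Real.rpow_nonneg (by linarith [hu.1]) _)
    · -- bound the integral
      have hIb : |∫ u in (1:ℝ)..zfun x y, (u - 1) ^ a * (u + 1) ^ (b - 2)|
          ≤ (zfun x y - 1) ^ a * 2 ^ (b - 2) * |zfun x y - 1| := by
        have := intervalIntegral.norm_integral_le_of_norm_le_const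
          (a := (1:ℝ)) (b := zfun x y)
          (C := (zfun x y - 1) ^ a * 2 ^ (b - 2))
          (f := fun u => (u - 1) ^ a * (u + 1) ^ (b - 2)) ?_
        · simpa [Real.norm_eq_abs] using this
        · intro u hu
          rw [Set.uIoc_of_le hz1] at hu
          obtain ⟨hu1, hu2⟩ := hu
          have hu0 : (0:ℝ) ≤ u - 1 := by linarith
          have h1 : (u - 1) ^ a ≤ (zfun x y - 1) ^ a :=
            Real.rpow_le_rpow hu0 (by linarith) ha0.le
          have h2 : (u + 1) ^ (b - 2) ≤ 2 ^ (b - 2) :=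
            Real.rpow_le_rpow_of_nonpos (by norm_num) (by linarith) (by linarith)
          rw [Real.norm_eq_abs, abs_of_nonneg
            (mul_nonneg (Real.rpow_nonneg hu0 _) (Real.rpow_nonneg (by linarith) _))]
          exact mul_le_mul h1 h2 (Real.rpow_nonneg (by linarith) _)
            (Real.rpow_nonneg hz0 _)
      rw [abs_of_nonneg hz0] at hIb
      have hint_le : (∫ u in (1:ℝ)..zfun x y, (u - 1) ^ a * (u + 1) ^ (b - 2))
          ≤ (zfun x y - 1) ^ a * 2 ^ (b - 2) * (zfun x y - 1) :=
        le_trans (le_abs_self _) hIb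
      have h2pos : (0:ℝ) ≤ (2:ℝ) ^ (b - 2) := (Real.rpow_pos_of_pos two_pos _).le
      have hr : (zfun x y - 1) ^ a ≤ (K * (y - 1)) ^ a :=
        Real.rpow_le_rpow hz0 hzK' ha0.le
      have hstep : (zfun x y - 1) ^ a * 2 ^ (b - 2) * (zfun x y - 1)
          ≤ (K * (y - 1)) ^ a * 2 ^ (b - 2) * (K * (y - 1)) :=
        mul_le_mul (mul_le_mul_of_nonneg_right hr h2pos) hzK' hz0
          (mul_nonneg (Real.rpow_nonneg (mul_nonneg hK0.le (by linarith)) _) h2pos)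
      have hKsplit : (K * (y - 1)) ^ a = K ^ a * (y - 1) ^ a :=
        Real.mul_rpow hK0.le (by linarith)
      have hginv : 1 / gfun α ρ y = (y - 1) ^ (-a) * (y + 1) ^ (1 - b) := by
        rw [gfun, ← ha, ← hb, Real.rpow_neg (by linarith : (0:ℝ) ≤ y - 1)]
        have h9 : (y + 1) ^ (1 - b) = ((y + 1) ^ (b - 1))⁻¹ := by
          rw [show (1 - b) = -(b - 1) by ring, Real.rpow_neg (by linarith : (0:ℝ) ≤ y + 1)]
        rw [h9, one_div, mul_inv]
      have hAc : (y - 1) ^ (-a) * (y - 1) ^ a = 1 := by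
        rw [← Real.rpow_add (by linarith : (0:ℝ) < y - 1)]; simp
      have hcalc : (1 / gfun α ρ y) * ((K * (y - 1)) ^ a * 2 ^ (b - 2) * (K * (y - 1)))
          = 2 ^ (b - 2) * (K ^ a * K) * (y + 1) ^ (1 - b) * (y - 1) := by
        rw [hginv, hKsplit]
        linear_combination
          (2 ^ (b - 2) * (K ^ a * K) * ((y + 1) ^ (1 - b)) * (y - 1)) * hAc
      have h3le : (y + 1) ^ (1 - b) ≤ 3 ^ (1 - b) :=
        Real.rpow_le_rpow (by linarith) (by linarith) (by linarith)
      calc (1 / gfun α ρ y) * ∫ u in (1:ℝ)..zfun x y, (u - 1) ^ a * (u + 1) ^ (b - 2)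
          ≤ (1 / gfun α ρ y) * ((K * (y - 1)) ^ a * 2 ^ (b - 2) * (K * (y - 1))) :=
            mul_le_mul_of_nonneg_left (le_trans hint_le hstep) hginv0
        _ = 2 ^ (b - 2) * (K ^ a * K) * (y + 1) ^ (1 - b) * (y - 1) := hcalc
        _ ≤ C * (y - 1) := by
            apply mul_le_mul_of_nonneg_right _ (by linarith : (0:ℝ) ≤ y - 1)
            rw [hC]
            exact mul_le_mul_of_nonneg_left h3le
              (mul_nonneg h2pos (mul_nonneg (Real.rpow_nonneg hK0.le _) hK0.le))
  apply squeeze_zero' (g := fun y => C * (y - 1))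
  · filter_upwards [hmem] with y hy using (key y hy).1
  · filter_upwards [hmem] with y hy using (key y hy).2
  · have h10 : Tendsto (fun y : ℝ => C * (y - 1)) (𝓝 1) (𝓝 (C * (1 - 1))) :=
      (tendsto_id.sub_const 1).const_mul C
    simpa using h10.mono_left nhdsWithin_le_nhds
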